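/- Let X be a compact metric space, and let u, v : X → ℝ be bounded functions with u upper semicontinuous and v lower semicontinuous. Suppose λ := sup_X (u − v) > 0. For ε > 0, let (x_ε, y_ε) ∈ X × X maximize Φ_ε(x,y) := u(x) − v(y) − d(x,y)²/(2ε). Then d(x_ε, y_ε)² ≤ 2ε (sup u + sup(−v) − λ), every subsequential limit of (x_ε, y_ε) as ε → 0 is of the form (x̂, x̂), and u(x_ε) − v(y_ε) ≥ λ. -/
import Mathlib

open Filter

/-- Standard doubling-of-variables estimate. -/
theorem stmt15 {X : Type*} [MetricSpace X] [CompactSpace X] [Nonempty X]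
    (u v : X → ℝ) (hu : UpperSemicontinuous u) (hv : LowerSemicontinuous v)
    (hub : ∃ C, ∀ x, |u x| ≤ C) (hvb : ∃ C, ∀ x, |v x| ≤ C)
    (lam : ℝ) (hlam : lam = sSup (Set.range fun x => u x - v x)) (hpos : 0 < lam)
    (x y : ℝ → X)
    (hmax : ∀ ε > (0 : ℝ), ∀ a b : X,
      u a - v b - dist a b ^ 2 / (2 * ε)
        ≤ u (x ε) - v (y ε) - dist (x ε) (y ε) ^ 2 / (2 * ε)) :
    (∀ ε > (0 : ℝ),
      dist (x ε) (y ε) ^ 2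
          ≤ 2 * ε * (sSup (Set.range u) + sSup (Set.range fun z => -v z) - lam)
        ∧ lam ≤ u (x ε) - v (y ε))
    ∧ ∀ εn : ℕ → ℝ, (∀ n, 0 < εn n) → Tendsto εn atTop (nhds 0) →
        ∀ a b : X, Tendsto (fun n => x (εn n)) atTop (nhds a) →
          Tendsto (fun n => y (εn n)) atTop (nhds b) → a = b := by
  obtain ⟨Cu, hCu⟩ := hub
  obtain ⟨Cv, hCv⟩ := hvb
  have hbu : BddAbove (Set.range u) :=
    ⟨Cu, by rintro _ ⟨z, rfl⟩; exact (abs_le.1 (hCu z)).2⟩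
  have hbv : BddAbove (Set.range fun z => -v z) :=
    ⟨Cv, by rintro _ ⟨z, rfl⟩; have := (abs_le.1 (hCv z)).1; simpa using by linarith⟩
  have key : ∀ ε > (0 : ℝ),
      dist (x ε) (y ε) ^ 2
          ≤ 2 * ε * (sSup (Set.range u) + sSup (Set.range fun z => -v z) - lam)
        ∧ lam ≤ u (x ε) - v (y ε) := by
    intro ε hε
    have hΦ : lam ≤ u (x ε) - v (y ε) - dist (x ε) (y ε) ^ 2 / (2 * ε) := by
      rw [hlam]
      apply csSup_le (Set.range_nonempty _)
      rintro _ ⟨a, rfl⟩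
      simpa using hmax ε hε a a
    have h2ε : (0 : ℝ) < 2 * ε := by linarith
    have hd2 : 0 ≤ dist (x ε) (y ε) ^ 2 / (2 * ε) := by positivity
    have h1 : dist (x ε) (y ε) ^ 2 ≤ (u (x ε) - v (y ε) - lam) * (2 * ε) := by
      rw [← div_le_iff₀ h2ε]; linarith
    have h2 : u (x ε) ≤ sSup (Set.range u) := le_csSup hbu ⟨_, rfl⟩
    have h3 : -v (y ε) ≤ sSup (Set.range fun z => -v z) := le_csSup hbv ⟨_, rfl⟩
    constructor
    · nlinarith
    · linarith
  refine ⟨key, ?_⟩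
  intro εn hεn hlim a b ha hb
  set M := sSup (Set.range u) + sSup (Set.range fun z => -v z) - lam with hM
  have hlimM : Tendsto (fun n => 2 * εn n * M) atTop (nhds 0) := by
    have := (hlim.const_mul (2 : ℝ)).mul_const M
    simpa using this
  have hdist : Tendsto (fun n => dist (x (εn n)) (y (εn n)) ^ 2) atTop
      (nhds (dist a b ^ 2)) := (ha.dist hb).pow 2
  have hle : dist a b ^ 2 ≤ 0 :=
    le_of_tendsto_of_tendsto' hdist hlimM fun n => (key (εn n) (hεn n)).1
  have : dist a b = 0 := by nlinarith [dist_nonneg (x := a) (y := b)]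
  exact eq_of_dist_eq_zero this
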